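/- If A is a d-th order n-dimensional real tensor such that A⊗A is super-symmetric, then the mode-1 unfolding matrix A(1) of A has rank one; equivalently, every 2×2 minor of A(1) vanishes. -/
import Mathlib


/-- Super-symmetry: invariance of entries under permutations of index positions. -/
def SuperSym {ι n : Type*} (A : (ι → n) → ℝ) : Prop :=
  ∀ (σ : Equiv.Perm ι) (i : ι → n), A (i ∘ σ) = A i

/-- If `A ⊗ A` is super-symmetric, then the mode-1 unfolding matrix of `A`
(rows indexed by the first index, columns by the remaining indices) has rank at most one;
equivalently, every 2×2 minor of it vanishes. -/
theorem stmt1 {d n : ℕ} (A : (Fin (d + 1) → Fin n) → ℝ)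
    (h : SuperSym (fun i : Fin (d + 1) ⊕ Fin (d + 1) → Fin n =>
        A (i ∘ Sum.inl) * A (i ∘ Sum.inr)))
    (M : Matrix (Fin n) (Fin d → Fin n) ℝ)
    (hM : M = Matrix.of fun r c => A (Fin.cons r c)) :
    (∀ (r r' : Fin n) (c c' : Fin d → Fin n), M r c * M r' c' = M r' c * M r c')
    ∧ M.rank ≤ 1 := by
  have key : ∀ (r r' : Fin n) (c c' : Fin d → Fin n),
      M r c * M r' c' = M r' c * M r c' := by
    intro r r' c c'
    have := h (Equiv.swap (Sum.inl 0) (Sum.inr 0))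
      (Sum.elim (Fin.cons r c) (Fin.cons r' c'))
    have e1 : (Sum.elim (Fin.cons r c) (Fin.cons r' c') ∘
        ⇑(Equiv.swap (Sum.inl (0:Fin (d+1))) (Sum.inr (0:Fin (d+1))))) ∘ Sum.inl
        = Fin.cons r' c := by
      funext j
      refine Fin.cases ?_ ?_ j <;> simp [Equiv.swap_apply_of_ne_of_ne, Fin.succ_ne_zero]
    have e2 : (Sum.elim (Fin.cons r c) (Fin.cons r' c') ∘
        ⇑(Equiv.swap (Sum.inl (0:Fin (d+1))) (Sum.inr (0:Fin (d+1))))) ∘ Sum.inr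
        = Fin.cons r c' := by
      funext j
      refine Fin.cases ?_ ?_ j <;> simp [Equiv.swap_apply_of_ne_of_ne, Fin.succ_ne_zero]
    simp only [e1, e2, Sum.elim_comp_inl, Sum.elim_comp_inr] at this
    subst hM
    simpa using this.symm
  refine ⟨key, ?_⟩
  by_cases hz : M = 0
  · simp [hz]
  · have : ∃ r0 c0, M r0 c0 ≠ 0 := by
      by_contra hc
      push_neg at hc
      exact hz (by ext r c; simp [hc])
    obtain ⟨r0, c0, h0⟩ := this
    have : M = Matrix.vecMulVec (fun r => M r c0 / M r0 c0) (fun c => M r0 c) := by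
      ext r c
      rw [Matrix.vecMulVec_apply]
      field_simp
      rw [key r r0 c0 c]
      ring
    rw [this, Matrix.rank_eq_finrank_span_cols]
    have hle : Submodule.span ℝ (Set.range (Matrix.vecMulVec
        (fun r => M r c0 / M r0 c0) (fun c => M r0 c)).transpose)
        ≤ Submodule.span ℝ ({fun r => M r c0 / M r0 c0} : Set (Fin n → ℝ)) := by
      refine Submodule.span_le.2 ?_
      rintro x ⟨j, rfl⟩
      refine Submodule.mem_span_singleton.2 ⟨M r0 j, ?_⟩
      funext r
      simp [Matrix.vecMulVec_apply, mul_comm]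
    refine le_trans (Submodule.finrank_mono hle) ?_
    simpa using finrank_span_le_card ({fun r => M r c0 / M r0 c0} : Set (Fin n → ℝ))
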